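/- arXiv:2212.14622 — 2 statements merged into one kernel-verified Lean document; each statement's English description precedes it below -/
import Mathlib

section
/- Let f be a probability density on ℝ, ℓ < μ reals, and Δ > 0 with μ − Δ ≥ ℓ + Δ. Suppose f is nondecreasing on [ℓ − Δ, ℓ + Δ] and nonincreasing on [μ − Δ, μ + Δ]. Define θ(Δ) = [F(ℓ) − F(ℓ−Δ)]·E[(H − (ℓ−Δ))/Δ | H ∈ [ℓ−Δ, ℓ]] + [F(μ−Δ) − F(ℓ)] + [F(μ) − F(μ−Δ)]·E[(μ − H)/Δ | H ∈ [μ−Δ, μ]], where F is the CDF of f and H has density f. Then θ(Δ) ≥ (1/2)[F(μ−Δ) − F(ℓ−Δ)] + (1/2)[F(μ) − F(ℓ)]. -/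
open MeasureTheory intervalIntegral

lemma weight_int_zero (a b : ℝ) (hab : a < b) :
    ∫ y in a..b, ((y - a) / (b - a) - 1 / 2) = 0 := by
  have hba : b - a ≠ 0 := sub_ne_zero.mpr hab.ne'
  have h : ∀ y : ℝ, (y - a) / (b - a) - 1 / 2 = (b - a)⁻¹ * y - (a / (b - a) + 1 / 2) := by
    intro y; field_simp; ring
  simp_rw [h]
  rw [intervalIntegral.integral_sub (by
        exact (continuous_id.intervalIntegrable a b).const_mul _) (intervalIntegrable_const),
      intervalIntegral.integral_const_mul, integral_id, intervalIntegral.integral_const]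
  simp only [smul_eq_mul]
  field_simp
  ring

lemma mono_half (f : ℝ → ℝ) (a b : ℝ) (hab : a < b)
    (hf : IntervalIntegrable f volume a b)
    (hmono : MonotoneOn f (Set.Icc a b)) :
    (1 / 2) * (∫ y in a..b, f y) ≤ ∫ y in a..b, ((y - a) / (b - a)) * f y := by
  set c := (a + b) / 2 with hc
  have hac : a ≤ c := by simp [hc]; linarith
  have hcb : c ≤ b := by simp [hc]; linarith
  have hba : (0:ℝ) < b - a := by linarith
  set w : ℝ → ℝ := fun y => (y - a) / (b - a) - 1 / 2 with hw
  have hwc : ContinuousOn w (Set.uIcc a b) := by fun_prop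
  have hsub1 : Set.uIcc a c ⊆ Set.uIcc a b := by
    rw [Set.uIcc_of_le hac, Set.uIcc_of_le hab.le]; exact Set.Icc_subset_Icc le_rfl hcb
  have hsub2 : Set.uIcc c b ⊆ Set.uIcc a b := by
    rw [Set.uIcc_of_le hcb, Set.uIcc_of_le hab.le]; exact Set.Icc_subset_Icc hac le_rfl
  have hint : IntervalIntegrable (fun y => w y * f y) volume a b :=
    hf.continuousOn_mul hwc
  have hint1 : IntervalIntegrable (fun y => w y * f y) volume a c := hint.mono_set hsub1
  have hint2 : IntervalIntegrable (fun y => w y * f y) volume c b := hint.mono_set hsub2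
  have hintc : IntervalIntegrable (fun y => w y * f c) volume a b := by
    have : IntervalIntegrable w volume a b :=
      (hwc.intervalIntegrable)
    simpa [mul_comm] using this.const_mul (f c)
  have hintc1 : IntervalIntegrable (fun y => w y * f c) volume a c := hintc.mono_set hsub1
  have hintc2 : IntervalIntegrable (fun y => w y * f c) volume c b := hintc.mono_set hsub2
  have hcmem : c ∈ Set.Icc a b := ⟨hac, hcb⟩
  -- on [a,c] : w ≤ 0, f y ≤ f c
  have h1 : (∫ y in a..c, w y * f c) ≤ ∫ y in a..c, w y * f y := by
    apply intervalIntegral.integral_mono_on hac hintc1 hint1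
    intro y hy
    have hym : y ∈ Set.Icc a b := ⟨hy.1, hy.2.trans hcb⟩
    have hfle : f y ≤ f c := hmono hym hcmem hy.2
    have hwle : w y ≤ 0 := by
      rw [hw]; simp only
      rw [sub_nonpos, div_le_iff₀ hba]
      have := hy.2; rw [hc] at this; linarith
    nlinarith
  have h2 : (∫ y in c..b, w y * f c) ≤ ∫ y in c..b, w y * f y := by
    apply intervalIntegral.integral_mono_on hcb hintc2 hint2
    intro y hy
    have hym : y ∈ Set.Icc a b := ⟨hac.trans hy.1, hy.2⟩
    have hfle : f c ≤ f y := hmono hcmem hym hy.1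
    have hwge : 0 ≤ w y := by
      rw [hw]; simp only
      rw [sub_nonneg, le_div_iff₀ hba]
      have := hy.1; rw [hc] at this; linarith
    nlinarith
  have hsum : (∫ y in a..b, w y * f c) ≤ ∫ y in a..b, w y * f y := by
    rw [← intervalIntegral.integral_add_adjacent_intervals hint1 hint2,
        ← intervalIntegral.integral_add_adjacent_intervals hintc1 hintc2]
    linarith
  have hzero : (∫ y in a..b, w y * f c) = 0 := by
    have : (∫ y in a..b, w y * f c) = (∫ y in a..b, w y) * f c := by
      rw [← intervalIntegral.integral_mul_const]
    rw [this, hw]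
    rw [weight_int_zero a b hab]
    ring
  have hkey : 0 ≤ ∫ y in a..b, w y * f y := hzero ▸ hsum
  have hsplit : (∫ y in a..b, w y * f y)
      = (∫ y in a..b, ((y - a) / (b - a)) * f y) - (1 / 2) * ∫ y in a..b, f y := by
    have : ∀ y, w y * f y = ((y - a) / (b - a)) * f y - (1/2) * f y := by
      intro y; rw [hw]; ring
    simp_rw [this]
    rw [intervalIntegral.integral_sub (by
        refine hf.continuousOn_mul ?_; fun_prop) (hf.const_mul _),
      intervalIntegral.integral_const_mul]
  linarith [hsplit ▸ hkey]

lemma anti_half (f : ℝ → ℝ) (a b : ℝ) (hab : a < b)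
    (hf : IntervalIntegrable f volume a b)
    (hanti : AntitoneOn f (Set.Icc a b)) :
    (1 / 2) * (∫ y in a..b, f y) ≤ ∫ y in a..b, ((b - y) / (b - a)) * f y := by
  have hg : MonotoneOn (fun y => -f y) (Set.Icc a b) := fun x hx y hy hxy =>
    neg_le_neg (hanti hx hy hxy)
  have := mono_half (fun y => -f y) a b hab hf.neg hg
  have e1 : (∫ y in a..b, -f y) = -∫ y in a..b, f y := intervalIntegral.integral_neg
  have e2 : (∫ y in a..b, ((y - a) / (b - a)) * (-f y))
      = -∫ y in a..b, ((y - a) / (b - a)) * f y := by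
    rw [← intervalIntegral.integral_neg]; congr 1; funext y; ring
  rw [e1, e2] at this
  -- so ∫ ((y-a)/(b-a)) f ≤ 1/2 ∫ f
  have h' : (∫ y in a..b, ((y - a) / (b - a)) * f y) ≤ (1/2) * ∫ y in a..b, f y := by
    linarith
  have hba : b - a ≠ 0 := sub_ne_zero.mpr hab.ne'
  have hsum : (∫ y in a..b, ((b - y) / (b - a)) * f y)
      = (∫ y in a..b, f y) - ∫ y in a..b, ((y - a) / (b - a)) * f y := by
    rw [eq_sub_iff_add_eq, ← intervalIntegral.integral_add]
    · congr 1; funext y; field_simp; ring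
    · refine hf.continuousOn_mul ?_; fun_prop
    · refine hf.continuousOn_mul ?_; fun_prop
  linarith

/-- Lower-bound step of Proposition `propheterolinear`: with `f` a density nondecreasing on
`[ℓ−Δ, ℓ+Δ]` and nonincreasing on `[μ−Δ, μ+Δ]`, the quantity
`θ(Δ) = ∫_{ℓ−Δ}^{ℓ} ((y−(ℓ−Δ))/Δ) f(y) dy + (F(μ−Δ) − F(ℓ)) + ∫_{μ−Δ}^{μ} ((μ−y)/Δ) f(y) dy`
(the mass-weighted conditional-expectation form) satisfies
`θ(Δ) ≥ (1/2)(F(μ−Δ) − F(ℓ−Δ)) + (1/2)(F(μ) − F(ℓ))`. -/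
theorem theta_lower_bound
    (f : ℝ → ℝ) (hf0 : ∀ y, 0 ≤ f y) (hfint : Integrable f) (hf1 : ∫ y, f y = 1)
    (ℓ m Δ : ℝ) (hlm : ℓ < m) (hΔ : 0 < Δ) (hsep : ℓ + Δ ≤ m - Δ)
    (hinc : MonotoneOn f (Set.Icc (ℓ - Δ) (ℓ + Δ)))
    (hdec : AntitoneOn f (Set.Icc (m - Δ) (m + Δ)))
    (F : ℝ → ℝ) (hF : ∀ t, F t = ∫ y in Set.Iic t, f y) :
    (∫ y in (ℓ - Δ)..ℓ, ((y - (ℓ - Δ)) / Δ) * f y)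
      + (F (m - Δ) - F ℓ)
      + (∫ y in (m - Δ)..m, ((m - y) / Δ) * f y)
    ≥ (1 / 2) * (F (m - Δ) - F (ℓ - Δ)) + (1 / 2) * (F m - F ℓ) := by
  have hFdiff : ∀ a b : ℝ, F b - F a = ∫ y in a..b, f y := by
    intro a b
    rw [hF a, hF b]
    exact integral_Iic_sub_Iic (hfint.integrableOn) (hfint.integrableOn)
  -- first interval
  have h1 : (1 / 2) * (F ℓ - F (ℓ - Δ)) ≤ ∫ y in (ℓ - Δ)..ℓ, ((y - (ℓ - Δ)) / Δ) * f y := by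
    have hab : ℓ - Δ < ℓ := by linarith
    have hmono : MonotoneOn f (Set.Icc (ℓ - Δ) ℓ) :=
      hinc.mono (Set.Icc_subset_Icc le_rfl (by linarith))
    have := mono_half f (ℓ - Δ) ℓ hab hfint.intervalIntegrable hmono
    have hd : ℓ - (ℓ - Δ) = Δ := by ring
    rw [hd] at this
    rw [hFdiff]
    exact this
  have h2 : (1 / 2) * (F m - F (m - Δ)) ≤ ∫ y in (m - Δ)..m, ((m - y) / Δ) * f y := by
    have hab : m - Δ < m := by linarith
    have hanti : AntitoneOn f (Set.Icc (m - Δ) m) :=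
      hdec.mono (Set.Icc_subset_Icc le_rfl (by linarith))
    have := anti_half f (m - Δ) m hab hfint.intervalIntegrable hanti
    have hd : m - (m - Δ) = Δ := by ring
    rw [hd] at this
    rw [hFdiff]
    exact this
  linarith
end

section
/- Let H and T be independent real random variables where T has a density p that is quasiconcave (unimodal) and H has a log-concave density f. Then the density of T − H is quasiconcave (unimodal). -/
open MeasureTheory

namespace ConvQC

/-- From quasiconcavity: three-point min inequality. -/
lemma qc_min3 {p : ℝ → ℝ} (hpqc : QuasiconcaveOn ℝ Set.univ p) :
    ∀ u v w : ℝ, u ≤ v → v ≤ w → min (p u) (p w) ≤ p v := by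
  intro u v w huv hvw
  rcases eq_or_lt_of_le (huv.trans hvw) with h | h
  · have hvu : v = u := le_antisymm (h ▸ hvw) huv
    subst hvu
    have : w = v := h.symm
    subst this
    simp
  · have hwu : 0 < w - u := by linarith
    set a : ℝ := (w - v) / (w - u) with ha_def
    set b : ℝ := (v - u) / (w - u) with hb_def
    have ha : 0 ≤ a := div_nonneg (by linarith) hwu.le
    have hb : 0 ≤ b := div_nonneg (by linarith) hwu.le
    have hab : a + b = 1 := by
      rw [ha_def, hb_def, ← add_div, div_eq_one_iff_eq hwu.ne']
      ring
    have hc := hpqc (min (p u) (p w)) ⟨Set.mem_univ u, min_le_left _ _⟩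
      ⟨Set.mem_univ w, min_le_right _ _⟩ ha hb hab
    have hv : a * u + b * w = v := by
      rw [ha_def, hb_def]
      field_simp
      ring
    have := hc.2
    simpa [smul_eq_mul, hv] using this

/-- Single sign change of `u ↦ p (u+δ) - p u` for quasiconcave `p`. -/
lemma single_cross {p : ℝ → ℝ} (hq : ∀ u v w : ℝ, u ≤ v → v ≤ w → min (p u) (p w) ≤ p v)
    {δ : ℝ} (hδ : 0 < δ) {u0 u : ℝ} (h0 : p (u0 + δ) < p u0) (hu : u0 ≤ u) :
    p (u + δ) ≤ p u := by
  rcases eq_or_lt_of_le hu with rfl | hu'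
  · exact h0.le
  rcases le_or_gt (u0 + δ) u with hcase | hcase
  · have h1 : min (p u0) (p (u + δ)) ≤ p (u0 + δ) :=
      hq u0 (u0 + δ) (u + δ) (by linarith) (by linarith)
    have h2 : p (u + δ) ≤ p (u0 + δ) := by
      rcases min_le_iff.mp h1 with h | h
      · rcases le_total (p (u + δ)) (p u0) with hle | hle
        · calc p (u+δ) ≤ p u0 := hle
            _ ≤ p (u0 + δ) := h
        · linarith
      · exact h
    have h3 : min (p (u0 + δ)) (p (u + δ)) ≤ p u := hq (u0 + δ) u (u + δ) hcase (by linarith)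
    rwa [min_eq_right h2] at h3
  · by_contra hlt
    push_neg at hlt
    have h4 : min (p u) (p (u + δ)) ≤ p (u0 + δ) :=
      hq u (u0 + δ) (u + δ) hcase.le (by linarith)
    rw [min_eq_left hlt.le] at h4
    have h5 : min (p u0) (p (u + δ)) ≤ p u := hq u0 u (u + δ) hu'.le (by linarith)
    have h6 : p u < p u0 := by linarith
    rcases min_le_iff.mp h5 with h | h
    · linarith
    · linarith

/-- TP2 property of the log-concave kernel. -/
lemma tp2 {f : ℝ → ℝ} (hf0 : ∀ x, 0 ≤ f x)
    (hflc : ∀ x y a b : ℝ, 0 ≤ a → 0 ≤ b → a + b = 1 →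
      f x ^ a * f y ^ b ≤ f (a * x + b * y)) :
    ∀ u1 u2 s t : ℝ, u1 ≤ u2 → s ≤ t →
      f (u1 - t) * f (u2 - s) ≤ f (u1 - s) * f (u2 - t) := by
  intro u1 u2 s t h12 hst
  rcases eq_or_lt_of_le h12 with rfl | h12'
  · rw [mul_comm]
  rcases eq_or_lt_of_le hst with rfl | hst'
  · exact le_rfl
  · set A : ℝ := u1 - t with hA
    set B : ℝ := u2 - s with hB
    rcases eq_or_lt_of_le (hf0 A) with hA0 | hA0
    · have : f A * f B = 0 := by rw [← hA0]; ring
      rw [this]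
      exact mul_nonneg (hf0 _) (hf0 _)
    rcases eq_or_lt_of_le (hf0 B) with hB0 | hB0
    · have : f A * f B = 0 := by rw [← hB0]; ring
      rw [this]
      exact mul_nonneg (hf0 _) (hf0 _)
    set lam : ℝ := (u2 - u1) / ((u2 - u1) + (t - s)) with hlam
    have hden : 0 < (u2 - u1) + (t - s) := by linarith
    have hlam0 : 0 ≤ lam := div_nonneg (by linarith) hden.le
    have hlam1' : 0 ≤ 1 - lam := by
      rw [sub_nonneg, hlam, div_le_one hden]
      linarith
    have h1 : lam * A + (1 - lam) * B = u1 - s := by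
      rw [hlam, hA, hB]
      field_simp
      ring
    have h2 : (1 - lam) * A + lam * B = u2 - t := by
      rw [hlam, hA, hB]
      field_simp
      ring
    have e1 : f A ^ lam * f B ^ (1 - lam) ≤ f (u1 - s) := by
      have := hflc A B lam (1 - lam) hlam0 hlam1' (by ring)
      rwa [h1] at this
    have e2 : f A ^ (1 - lam) * f B ^ lam ≤ f (u2 - t) := by
      have := hflc A B (1 - lam) lam hlam1' hlam0 (by ring)
      rwa [h2] at this
    have key : f A * f B = (f A ^ lam * f B ^ (1 - lam)) * (f A ^ (1 - lam) * f B ^ lam) := by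
      rw [show (f A ^ lam * f B ^ (1 - lam)) * (f A ^ (1 - lam) * f B ^ lam)
          = (f A ^ lam * f A ^ (1 - lam)) * (f B ^ (1 - lam) * f B ^ lam) by ring,
        ← Real.rpow_add hA0, ← Real.rpow_add hB0]
      norm_num
    rw [key]
    exact mul_le_mul e1 e2 (mul_nonneg (Real.rpow_nonneg (hf0 _) _) (Real.rpow_nonneg (hf0 _) _))
      (le_trans (mul_nonneg (Real.rpow_nonneg (hf0 _) _) (Real.rpow_nonneg (hf0 _) _)) e1)

/-- An integrable nonneg function with integral 1 is positive at two distinct points. -/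
lemma two_pos {f : ℝ → ℝ} (hf0 : ∀ x, 0 ≤ f x) (hfint : Integrable f)
    (hf1 : ∫ x, f x = 1) : ∃ x0 x1 : ℝ, x0 < x1 ∧ 0 < f x0 ∧ 0 < f x1 := by
  by_contra hcon
  push_neg at hcon
  have hsub : Set.Subsingleton {x : ℝ | 0 < f x} := by
    intro a ha b hb
    by_contra hab
    rcases lt_or_gt_of_ne hab with h | h
    · exact absurd hb (by simpa using (hcon a b h ha).not_gt)
    · exact absurd ha (by simpa using (hcon b a h hb).not_gt)
  have hnull : (volume : Measure ℝ) {x : ℝ | 0 < f x} = 0 := hsub.measure_zero _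
  have hae : f =ᵐ[volume] 0 := by
    rw [Filter.EventuallyEq, ae_iff]
    apply measure_mono_null _ hnull
    intro x hx
    simp only [Set.mem_setOf_eq] at hx ⊢
    exact lt_of_le_of_ne (hf0 x) (Ne.symm hx)
  rw [integral_congr_ae hae] at hf1
  simp at hf1

/-- A log-concave integrable probability density is (globally) bounded. -/
lemma logconcave_bounded {f : ℝ → ℝ} (hf0 : ∀ x, 0 ≤ f x) (hfint : Integrable f)
    (hf1 : ∫ x, f x = 1)
    (hflc : ∀ x y a b : ℝ, 0 ≤ a → 0 ≤ b → a + b = 1 →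
      f x ^ a * f y ^ b ≤ f (a * x + b * y)) :
    ∃ M : ℝ, 0 < M ∧ ∀ x, f x ≤ M := by
  obtain ⟨x0, x1, hx01, h0, h1⟩ := two_pos hf0 hfint hf1
  set ε : ℝ := min (f x0) (f x1) with hε_def
  have hε : 0 < ε := lt_min h0 h1
  set L : ℝ := x1 - x0 with hL_def
  have hL : 0 < L := by simp [hL_def]; linarith
  -- f ≥ ε on [x0, x1]
  have hlow : ∀ v ∈ Set.Icc x0 x1, ε ≤ f v := by
    intro v hv
    obtain ⟨hv0, hv1⟩ := hv
    set a : ℝ := (x1 - v) / L with ha_def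
    set b : ℝ := (v - x0) / L with hb_def
    have ha : 0 ≤ a := div_nonneg (by linarith) hL.le
    have hb : 0 ≤ b := div_nonneg (by linarith) hL.le
    have hab : a + b = 1 := by
      rw [ha_def, hb_def, ← add_div, div_eq_one_iff_eq hL.ne']
      rw [hL_def]; ring
    have hv' : a * x0 + b * x1 = v := by
      rw [ha_def, hb_def, hL_def, div_mul_eq_mul_div, div_mul_eq_mul_div, ← add_div,
        div_eq_iff (sub_ne_zero.mpr hx01.ne')]; ring
    have := hflc x0 x1 a b ha hb hab
    rw [hv'] at this
    refine le_trans ?_ this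
    calc ε = ε ^ a * ε ^ b := by
          rw [← Real.rpow_add hε, hab, Real.rpow_one]
      _ ≤ f x0 ^ a * f x1 ^ b := by
          apply mul_le_mul
          · exact Real.rpow_le_rpow hε.le (min_le_left _ _) ha
          · exact Real.rpow_le_rpow hε.le (min_le_right _ _) hb
          · exact Real.rpow_nonneg hε.le _
          · exact Real.rpow_nonneg (hf0 _) _
  refine ⟨max 1 (4 / (L ^ 2 * ε)), lt_of_lt_of_le one_pos (le_max_left _ _), fun x => ?_⟩
  rcases eq_or_lt_of_le (hf0 x) with hfx | hfx
  · exact le_trans (by rw [← hfx]; norm_num) (le_max_left _ _)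
  -- on the interval J = [(x+x0)/2, (x+x1)/2], f ≥ sqrt (f x * ε)
  have hmid : ∀ w ∈ Set.Icc ((x + x0)/2) ((x + x1)/2), Real.sqrt (f x * ε) ≤ f w := by
    intro w hw
    obtain ⟨hw0, hw1⟩ := hw
    set v : ℝ := 2 * w - x with hv_def
    have hv : v ∈ Set.Icc x0 x1 := ⟨by rw [hv_def]; linarith, by rw [hv_def]; linarith⟩
    have hw' : (1/2 : ℝ) * x + (1/2 : ℝ) * v = w := by rw [hv_def]; ring
    have := hflc x v (1/2) (1/2) (by norm_num) (by norm_num) (by norm_num)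
    rw [hw'] at this
    refine le_trans ?_ this
    rw [Real.sqrt_eq_rpow, Real.mul_rpow (hf0 x) hε.le]
    exact mul_le_mul_of_nonneg_left
      (Real.rpow_le_rpow hε.le (hlow v hv) (by norm_num)) (Real.rpow_nonneg (hf0 x) _)
  have hJint : ∫ w in Set.Icc ((x + x0)/2) ((x + x1)/2), f w ≤ 1 := by
    rw [← hf1]
    exact setIntegral_le_integral hfint (Filter.Eventually.of_forall hf0)
  have hvol : (volume (Set.Icc ((x + x0)/2) ((x + x1)/2))).toReal = L / 2 := by
    rw [Real.volume_Icc, ENNReal.toReal_ofReal (by linarith)]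
    rw [hL_def]; ring
  have hlb : Real.sqrt (f x * ε) * (L / 2) ≤ 1 := by
    have := setIntegral_ge_of_const_le (measurableSet_Icc)
      (by rw [Real.volume_Icc]; exact ENNReal.ofReal_ne_top)
      hmid (hfint.integrableOn)
    rw [measureReal_def, hvol, smul_eq_mul] at this
    linarith
  have hsq : Real.sqrt (f x * ε) ≤ 2 / L := by
    rw [← le_div_iff₀ (by positivity)] at hlb
    calc Real.sqrt (f x * ε) ≤ 1 / (L/2) := hlb
      _ = 2 / L := by field_simp
  have hfx2 : f x * ε ≤ (2 / L) ^ 2 := by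
    have h2L : (0:ℝ) ≤ 2 / L := by positivity
    nlinarith [Real.sq_sqrt (mul_nonneg (hf0 x) hε.le), Real.sqrt_nonneg (f x * ε)]
  have h4 : (2 / L) ^ 2 * L ^ 2 = 4 := by field_simp; norm_num
  have : f x ≤ 4 / (L ^ 2 * ε) := by
    rw [le_div_iff₀ (by positivity)]
    have h5 := mul_le_mul_of_nonneg_right hfx2 (sq_nonneg L)
    rw [h4] at h5
    nlinarith [h5]
  exact le_trans this (le_max_right _ _)

lemma int_shift {p : ℝ → ℝ} (hp : Integrable p) (s : ℝ) :
    Integrable (fun u => p (u + s)) :=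
  ((measurePreserving_add_right volume s).integrable_comp hp.aestronglyMeasurable).mpr hp

lemma int_shift' {p : ℝ → ℝ} (hp : Integrable p) (s : ℝ) :
    Integrable (fun u => p (u - s)) := by
  simpa [sub_eq_add_neg] using int_shift hp (-s)

/-- Continuity of translation in L¹. -/
lemma transL1 {p : ℝ → ℝ} (hp : Integrable p) {ε : ℝ} (hε : 0 < ε) :
    ∃ η : ℝ, 0 < η ∧ ∀ s : ℝ, |s| < η → (∫ u, |p (u + s) - p u|) ≤ ε := by
  obtain ⟨q, hqsupp, hqL1, hqc, hqint⟩ :=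
    hp.exists_hasCompactSupport_integral_sub_le (by positivity : (0:ℝ) < ε/4)
  obtain ⟨r0, hr0⟩ := hqsupp.isBounded.subset_ball (0:ℝ)
  set r : ℝ := max r0 1 with hr_def
  have hr1 : (1:ℝ) ≤ r := le_max_right _ _
  have hrpos : (0:ℝ) < r := lt_of_lt_of_le one_pos hr1
  have hsupp : tsupport q ⊆ Metric.ball 0 r :=
    hr0.trans (Metric.ball_subset_ball (le_max_left _ _))
  have hq0 : ∀ u : ℝ, r ≤ |u| → q u = 0 := by
    intro u hu
    apply image_eq_zero_of_notMem_tsupport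
    intro hmem
    have := hsupp hmem
    rw [mem_ball_zero_iff, Real.norm_eq_abs] at this
    linarith
  have huc := hqsupp.uniformContinuous_of_continuous hqc
  set ε' : ℝ := ε / (2 * (2 * r + 2)) with hε'_def
  have hε' : 0 < ε' := by
    rw [hε'_def]
    positivity
  obtain ⟨δ0, hδ0, hδ⟩ := Metric.uniformContinuous_iff.mp huc ε' hε'
  refine ⟨min δ0 1, lt_min hδ0 one_pos, fun s hs => ?_⟩
  have hs1 : |s| < 1 := lt_of_lt_of_le hs (min_le_right _ _)
  have hsδ : |s| < δ0 := lt_of_lt_of_le hs (min_le_left _ _)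
  have hps := int_shift hp s
  have hqs := int_shift hqint s
  -- the three pieces
  have T1 : (∫ u, |p (u + s) - q (u + s)|) ≤ ε / 4 := by
    have heq : (∫ u, |p (u + s) - q (u + s)|) = ∫ u, |p u - q u| :=
      integral_add_right_eq_self (fun u => |p u - q u|) s
    rw [heq]
    calc (∫ u, |p u - q u|) = ∫ u, ‖p u - q u‖ := by
          simp [Real.norm_eq_abs]
      _ ≤ ε / 4 := hqL1
  have T3 : (∫ u, |q u - p u|) ≤ ε / 4 := by
    have : (fun u => |q u - p u|) = fun u => ‖p u - q u‖ := by
      funext u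
      rw [Real.norm_eq_abs, abs_sub_comm]
    rw [this]
    exact hqL1
  have T2 : (∫ u, |q (u + s) - q u|) ≤ ε / 2 := by
    set K : Set ℝ := Set.Icc (-(r+1)) (r+1) with hK_def
    have hzero : ∀ u : ℝ, u ∉ K → |q (u + s) - q u| = 0 := by
      intro u hu
      rw [hK_def, Set.mem_Icc, not_and_or] at hu
      have habs : r + 1 < |u| := by
        rcases hu with h | h
        · push_neg at h
          rw [abs_of_neg (by linarith)]
          linarith
        · push_neg at h
          rw [abs_of_pos (by linarith)]
          exact h
      have h1 : q u = 0 := hq0 u (by linarith)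
      have h2 : q (u + s) = 0 := by
        apply hq0
        have h5 := abs_sub_abs_le_abs_sub u (u + s)
        have h6 : |u - (u + s)| = |s| := by
          rw [show u - (u + s) = -s by ring, abs_neg]
        rw [h6] at h5
        linarith
      rw [h1, h2]
      simp
    have hKvol : volume K < ⊤ := by
      rw [hK_def, Real.volume_Icc]
      exact ENNReal.ofReal_lt_top
    have hbd : ∀ u ∈ K, ‖|q (u + s) - q u|‖ ≤ ε' := by
      intro u _
      rw [Real.norm_eq_abs, abs_abs]
      have : dist (q (u + s)) (q u) < ε' := by
        apply hδ
        rw [Real.dist_eq]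
        simpa using hsδ
      rw [Real.dist_eq] at this
      exact this.le
    have hKtr : (volume K).toReal = 2 * r + 2 := by
      rw [hK_def, Real.volume_Icc, ENNReal.toReal_ofReal (by linarith)]
      ring
    calc (∫ u, |q (u + s) - q u|)
        = ∫ u in K, |q (u + s) - q u| :=
          (setIntegral_eq_integral_of_forall_compl_eq_zero hzero).symm
      _ ≤ ‖∫ u in K, |q (u + s) - q u|‖ := le_abs_self _
      _ ≤ ε' * (volume K).toReal :=
          norm_setIntegral_le_of_norm_le_const hKvol hbd
      _ = ε / 2 := by
          rw [hKtr, hε'_def]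
          field_simp
  -- triangle inequality
  have tri : ∀ u : ℝ, |p (u + s) - p u| ≤
      |p (u + s) - q (u + s)| + (|q (u + s) - q u| + |q u - p u|) := by
    intro u
    calc |p (u + s) - p u|
        = |(p (u + s) - q (u + s)) + ((q (u + s) - q u) + (q u - p u))| := by ring_nf
      _ ≤ _ := by
          refine le_trans (abs_add_le _ _) ?_
          exact add_le_add le_rfl (abs_add_le _ _)
  have I1 : Integrable (fun u => |p (u + s) - q (u + s)|) := (hps.sub hqs).abs
  have I2 : Integrable (fun u => |q (u + s) - q u|) := (hqs.sub hqint).abs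
  have I3 : Integrable (fun u => |q u - p u|) := (hqint.sub hp).abs
  calc (∫ u, |p (u + s) - p u|)
      ≤ ∫ u, (|p (u + s) - q (u + s)| + (|q (u + s) - q u| + |q u - p u|)) := by
        apply integral_mono ((hps.sub hp).abs) (I1.add (I2.add I3)) tri
    _ = (∫ u, |p (u + s) - q (u + s)|) + ((∫ u, |q (u + s) - q u|) + ∫ u, |q u - p u|) := by
        have I23 : Integrable (fun u => |q (u + s) - q u| + |q u - p u|) := I2.add I3
        rw [integral_add I1 I23, integral_add I2 I3]
    _ ≤ ε / 4 + (ε / 2 + ε / 4) := by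
        exact add_le_add T1 (add_le_add T2 T3)
    _ = ε := by ring

lemma int_mul_shift {a f : ℝ → ℝ} (ha : Integrable a) (hfint : Integrable f)
    (hf0 : ∀ x, 0 ≤ f x) {M : ℝ} (hfM : ∀ x, f x ≤ M) (r : ℝ) :
    Integrable (fun u => a u * f (u - r)) := by
  have h := Integrable.bdd_mul ha ((int_shift' hfint r).aestronglyMeasurable)
    (Filter.Eventually.of_forall (fun x => by rw [Real.norm_eq_abs, abs_of_nonneg (hf0 _)]; exact hfM _) :
      ∀ᵐ x ∂volume, ‖f (x - r)‖ ≤ M)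
  exact h.congr (Filter.Eventually.of_forall fun u => mul_comm _ _)

/-- The heart: a single strict descent of the smoothed step propagates to the right. -/
lemma crossing {p f : ℝ → ℝ} (hpint : Integrable p)
    (hq : ∀ u v w : ℝ, u ≤ v → v ≤ w → min (p u) (p w) ≤ p v)
    (hf0 : ∀ x, 0 ≤ f x) (hfint : Integrable f) {M : ℝ} (hfM : ∀ x, f x ≤ M)
    (htp2 : ∀ u1 u2 s t : ℝ, u1 ≤ u2 → s ≤ t →
      f (u1 - t) * f (u2 - s) ≤ f (u1 - s) * f (u2 - t))
    {δ : ℝ} (hδ : 0 < δ) {s t : ℝ} (hst : s ≤ t)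
    (hneg : (∫ u, (p (u + δ) - p u) * f (u - s)) < 0) :
    (∫ u, (p (u + δ) - p u) * f (u - t)) ≤ 0 := by
  set φ : ℝ → ℝ := fun u => p (u + δ) - p u with hφ_def
  set φp : ℝ → ℝ := fun u => max (φ u) 0 with hφp_def
  set φm : ℝ → ℝ := fun u => max (-φ u) 0 with hφm_def
  have hφint : Integrable φ := (int_shift hpint δ).sub hpint
  have hφp_int : Integrable φp := hφint.pos_part
  have hφm_int : Integrable φm := hφint.neg.pos_part
  have hφp0 : ∀ u, 0 ≤ φp u := fun u => le_max_right _ _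
  have hφm0 : ∀ u, 0 ≤ φm u := fun u => le_max_right _ _
  have hdecomp : ∀ u, φp u - φm u = φ u := by
    intro u
    rcases le_total (φ u) 0 with h | h
    · rw [hφp_def, hφm_def]
      simp only [max_eq_right h, max_eq_left (by linarith : (0:ℝ) ≤ -φ u)]
      ring
    · rw [hφp_def, hφm_def]
      simp only [max_eq_left h, max_eq_right (by linarith : -φ u ≤ (0:ℝ))]
      ring
  have Ipos : ∀ r : ℝ, Integrable (fun u => φp u * f (u - r)) :=
    fun r => int_mul_shift hφp_int hfint hf0 hfM r
  have Ineg : ∀ r : ℝ, Integrable (fun u => φm u * f (u - r)) :=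
    fun r => int_mul_shift hφm_int hfint hf0 hfM r
  set P : ℝ → ℝ := fun r => ∫ u, φp u * f (u - r) with hP_def
  set N : ℝ → ℝ := fun r => ∫ u, φm u * f (u - r) with hN_def
  have ξeq : ∀ r : ℝ, (∫ u, φ u * f (u - r)) = P r - N r := by
    intro r
    rw [hP_def, hN_def, ← integral_sub (Ipos r) (Ineg r)]
    apply integral_congr_ae
    apply Filter.Eventually.of_forall
    intro u
    show φ u * f (u - r) = φp u * f (u - r) - φm u * f (u - r)
    rw [← hdecomp u]
    ring
  have hP0 : ∀ r, 0 ≤ P r := fun r =>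
    integral_nonneg fun u => mul_nonneg (hφp0 u) (hf0 _)
  have hN0 : ∀ r, 0 ≤ N r := fun r =>
    integral_nonneg fun u => mul_nonneg (hφm0 u) (hf0 _)
  -- sign extraction from pos/neg parts
  have hsgn : ∀ u1 u2 : ℝ, φp u1 ≠ 0 → φm u2 ≠ 0 → u1 ≤ u2 := by
    intro u1 u2 h1 h2
    have hpos : 0 < φ u1 := by
      rcases le_or_gt (φ u1) 0 with h | h
      · exact absurd (max_eq_right h) h1
      · exact h
    have hneg2 : φ u2 < 0 := by
      rcases le_or_gt 0 (φ u2) with h | h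
      · exact absurd (max_eq_right (by linarith : -φ u2 ≤ 0)) h2
      · exact h
    by_contra hcon
    push_neg at hcon
    have := single_cross hq hδ (by rw [hφ_def] at hneg2; simpa using sub_neg.mp hneg2) hcon.le
    rw [hφ_def] at hpos
    simp only [] at hpos
    linarith [sub_pos.mp hpos]
  -- key TP2 inequality for the pair of integrals
  have key : P t * N s ≤ P s * N t := by
    have inner : ∀ u1 : ℝ, (φp u1 * f (u1 - t)) * N s ≤ (φp u1 * f (u1 - s)) * N t := by
      intro u1
      have e1 : (φp u1 * f (u1 - t)) * N s
          = ∫ u2, (φp u1 * f (u1 - t)) * (φm u2 * f (u2 - s)) :=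
        (integral_const_mul _ _).symm
      have e2 : (φp u1 * f (u1 - s)) * N t
          = ∫ u2, (φp u1 * f (u1 - s)) * (φm u2 * f (u2 - t)) :=
        (integral_const_mul _ _).symm
      rw [e1, e2]
      apply integral_mono ((Ineg s).const_mul _) ((Ineg t).const_mul _)
      intro u2
      by_cases h1 : φp u1 = 0
      · simp [h1]
      by_cases h2 : φm u2 = 0
      · simp [h2]
      have h12 : u1 ≤ u2 := hsgn u1 u2 h1 h2
      have htp := htp2 u1 u2 s t h12 hst
      have hnn : 0 ≤ φp u1 * φm u2 := mul_nonneg (hφp0 u1) (hφm0 u2)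
      calc (φp u1 * f (u1 - t)) * (φm u2 * f (u2 - s))
          = (φp u1 * φm u2) * (f (u1 - t) * f (u2 - s)) := by ring
        _ ≤ (φp u1 * φm u2) * (f (u1 - s) * f (u2 - t)) :=
            mul_le_mul_of_nonneg_left htp hnn
        _ = (φp u1 * f (u1 - s)) * (φm u2 * f (u2 - t)) := by ring
    calc P t * N s = ∫ u1, (φp u1 * f (u1 - t)) * N s := (integral_mul_const _ _).symm
      _ ≤ ∫ u1, (φp u1 * f (u1 - s)) * N t :=
          integral_mono ((Ipos t).mul_const _) ((Ipos s).mul_const _) inner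
      _ = P s * N t := integral_mul_const _ _
  have hneg' : P s < N s := by
    have := hneg
    rw [show (∫ u, (p (u + δ) - p u) * f (u - s)) = ∫ u, φ u * f (u - s) from rfl, ξeq s] at this
    linarith
  have hNs : 0 < N s := lt_of_le_of_lt (hP0 s) hneg'
  have h7 : P s * N t ≤ N s * N t := mul_le_mul_of_nonneg_right hneg'.le (hN0 t)
  have h8 : P t * N s ≤ N s * N t := key.trans h7
  have h9 : P t ≤ N t := by nlinarith [h8, hNs]
  rw [show (∫ u, (p (u + δ) - p u) * f (u - t)) = ∫ u, φ u * f (u - t) from rfl, ξeq t]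
  linarith

end ConvQC

open ConvQC in
/-- Convolution with a log-concave density preserves quasiconcavity: if `p` is a
quasiconcave probability density and `f` is a log-concave probability density, then the
density of `T − H` (with `T ~ p`, `H ~ f` independent), namely `t ↦ ∫ p(t+h) f(h) dh`,
is quasiconcave. -/
theorem convolution_logconcave_preserves_quasiconcave
    (p f : ℝ → ℝ)
    (hp0 : ∀ x, 0 ≤ p x) (hpint : Integrable p) (hp1 : ∫ x, p x = 1)
    (hpqc : QuasiconcaveOn ℝ Set.univ p)
    (hf0 : ∀ x, 0 ≤ f x) (hfint : Integrable f) (hf1 : ∫ x, f x = 1)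
    (hflc : ∀ x y a b : ℝ, 0 ≤ a → 0 ≤ b → a + b = 1 →
      f x ^ a * f y ^ b ≤ f (a * x + b * y)) :
    QuasiconcaveOn ℝ Set.univ (fun t => ∫ h, p (t + h) * f h) := by
  obtain ⟨M, hMpos, hfM⟩ := logconcave_bounded hf0 hfint hf1 hflc
  have hq := qc_min3 hpqc
  have htp2 := tp2 hf0 hflc
  set g : ℝ → ℝ := fun t => ∫ h, p (t + h) * f h with hg_def
  have hgrep : ∀ t : ℝ, g t = ∫ u, p u * f (u - t) := by
    intro t
    calc g t = ∫ h, p (t + h) * f ((t + h) - t) := by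
          simp only [hg_def, add_sub_cancel_left]
      _ = ∫ u, p u * f (u - t) := integral_add_left_eq_self (fun u => p u * f (u - t)) t
  have hstep : ∀ δ r : ℝ, g (r + δ) - g r = ∫ u, (p (u + δ) - p u) * f (u - r) := by
    intro δ r
    have e1 : g (r + δ) = ∫ u, p (u + δ) * f (u - r) := by
      calc g (r + δ) = ∫ u, p u * f (u - (r + δ)) := hgrep _
        _ = ∫ u, p (u + δ) * f ((u + δ) - (r + δ)) :=
            (integral_add_right_eq_self (fun u => p u * f (u - (r + δ))) δ).symm
        _ = ∫ u, p (u + δ) * f (u - r) := by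
            simp only [add_sub_add_right_eq_sub]
    rw [e1, hgrep r,
      ← integral_sub (int_mul_shift (int_shift hpint δ) hfint hf0 hfM r)
        (int_mul_shift hpint hfint hf0 hfM r)]
    apply integral_congr_ae
    apply Filter.Eventually.of_forall
    intro u
    show p (u + δ) * f (u - r) - p u * f (u - r) = (p (u + δ) - p u) * f (u - r)
    ring
  have hgcross : ∀ {δ : ℝ}, 0 < δ → ∀ {s t : ℝ}, s ≤ t → g (s + δ) < g s → g (t + δ) ≤ g t := by
    intro δ hδ s t hst hdec
    have h1 : (∫ u, (p (u + δ) - p u) * f (u - s)) < 0 := by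
      rw [← hstep δ s]; linarith
    have h2 := crossing hpint hq hf0 hfint hfM htp2 hδ hst h1
    rw [← hstep δ t] at h2
    linarith
  have hcont : ∀ z : ℝ, ∀ ε : ℝ, 0 < ε → ∃ η : ℝ, 0 < η ∧
      ∀ w : ℝ, |w - z| < η → |g w - g z| ≤ ε := by
    intro z ε hε
    obtain ⟨η, hη, hT⟩ := transL1 hpint (div_pos hε hMpos)
    refine ⟨η, hη, fun w hw => ?_⟩
    have e1 : g w - g z = ∫ u, (p (u + (w - z)) - p u) * f (u - z) := by
      have := hstep (w - z) z
      rwa [show z + (w - z) = w by ring] at this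
    rw [e1]
    have Iabs : Integrable (fun u => |p (u + (w - z)) - p u|) :=
      ((int_shift hpint (w - z)).sub hpint).abs
    calc |∫ u, (p (u + (w - z)) - p u) * f (u - z)|
        ≤ ∫ u, |(p (u + (w - z)) - p u) * f (u - z)| := by
          simpa only [Real.norm_eq_abs] using
            norm_integral_le_integral_norm (fun u => (p (u + (w - z)) - p u) * f (u - z))
      _ ≤ ∫ u, |p (u + (w - z)) - p u| * M := by
          apply integral_mono
            ((int_mul_shift ((int_shift hpint (w - z)).sub hpint) hfint hf0 hfM z).abs)
            (Iabs.mul_const M)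
          intro u
          show |(p (u + (w - z)) - p u) * f (u - z)| ≤ |p (u + (w - z)) - p u| * M
          rw [abs_mul, abs_of_nonneg (hf0 _)]
          exact mul_le_mul_of_nonneg_left (hfM _) (abs_nonneg _)
      _ = (∫ u, |p (u + (w - z)) - p u|) * M := integral_mul_const _ _
      _ ≤ (ε / M) * M := mul_le_mul_of_nonneg_right (hT (w - z) hw) hMpos.le
      _ = ε := by field_simp
  -- main three-point inequality
  have main : ∀ x z y : ℝ, x < z → z < y → min (g x) (g y) ≤ g z := by
    intro x z y hxz hzy
    by_contra hcon
    push_neg at hcon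
    set m : ℝ := min (g x) (g y) with hm_def
    have hmz : 0 < m - g z := by linarith
    obtain ⟨η, hη, hnear⟩ := hcont z ((m - g z) / 2) (by linarith)
    obtain ⟨n, hn⟩ := exists_nat_gt (max ((y - x) / η) ((y - x) / (z - x)))
    have hyx : 0 < y - x := by linarith
    have hzx : 0 < z - x := by linarith
    have hmax2 : 0 < (y - x) / (z - x) := div_pos hyx hzx
    have hnpos : 0 < (n : ℝ) :=
      lt_trans (lt_of_lt_of_le hmax2 (le_max_right _ _)) hn
    have hn0 : n ≠ 0 := by
      intro h
      rw [h] at hnpos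
      simp at hnpos
    set δ : ℝ := (y - x) / n with hδ_def
    have hδpos : 0 < δ := div_pos hyx hnpos
    have hδη : δ < η := by
      rw [hδ_def, div_lt_iff₀ hnpos]
      have h1 : (y - x) / η < n := lt_of_le_of_lt (le_max_left _ _) hn
      rw [div_lt_iff₀ hη] at h1
      linarith [mul_comm η (n:ℝ)]
    have hδzx : δ < z - x := by
      rw [hδ_def, div_lt_iff₀ hnpos]
      have h1 : (y - x) / (z - x) < n := lt_of_le_of_lt (le_max_right _ _) hn
      rw [div_lt_iff₀ hzx] at h1
      linarith [mul_comm (z - x) (n:ℝ)]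
    set k : ℕ := ⌊(z - x) / δ⌋₊ with hk_def
    have hratio1 : 1 ≤ (z - x) / δ := by
      rw [le_div_iff₀ hδpos]
      linarith
    have hk1 : 1 ≤ k := by
      rw [hk_def]
      exact Nat.le_floor (by exact_mod_cast hratio1)
    have hkle : (k : ℝ) ≤ (z - x) / δ := Nat.floor_le (by positivity)
    have hkgt : (z - x) / δ < (k : ℝ) + 1 := Nat.lt_floor_add_one _
    set z' : ℝ := x + k * δ with hz'_def
    have hz'le : z' ≤ z := by
      rw [hz'_def]
      have := (le_div_iff₀ hδpos).mp hkle
      linarith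
    have hz'gt : z - δ < z' := by
      rw [hz'_def]
      have := (div_lt_iff₀ hδpos).mp hkgt
      linarith
    have hz'near : |z' - z| < η := by
      rw [abs_of_nonpos (by linarith)]
      linarith
    have hgz' : g z' < m := by
      have h := hnear z' hz'near
      have h2 := (abs_le.mp h).2
      linarith
    have hkn : (k : ℝ) < n := by
      have h1 : (y - x) / δ = n := by
        rw [hδ_def]
        field_simp
      calc (k : ℝ) ≤ (z - x) / δ := hkle
        _ < (y - x) / δ := by gcongr <;> linarith
        _ = n := h1
    have hkn' : k < n := by exact_mod_cast hkn
    have hdesc : ∃ j : ℕ, j < k ∧ g (x + ((j : ℝ) + 1) * δ) < g (x + (j : ℝ) * δ) := by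
      by_contra hnd
      push_neg at hnd
      have mono : ∀ j : ℕ, j ≤ k → g x ≤ g (x + (j : ℝ) * δ) := by
        intro j hj
        induction j with
        | zero => simp
        | succ i ih =>
          have hik : i < k := lt_of_lt_of_le (Nat.lt_succ_self i) hj
          have h1 := ih (le_of_lt hik)
          have h2 := hnd i hik
          have : g x ≤ g (x + ((i : ℝ) + 1) * δ) := le_trans h1 h2
          have hcast : ((i + 1 : ℕ) : ℝ) = (i : ℝ) + 1 := by push_cast; ring
          rw [hcast]
          exact this
      have hzx' := mono k le_rfl
      have hmx : m ≤ g x := min_le_left _ _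
      rw [← hz'_def] at hzx'
      linarith
    obtain ⟨j, hjk, hjdec⟩ := hdesc
    have hjdec' : g ((x + (j : ℝ) * δ) + δ) < g (x + (j : ℝ) * δ) := by
      have heq : x + ((j : ℝ) + 1) * δ = (x + (j : ℝ) * δ) + δ := by ring
      rwa [heq] at hjdec
    have hprop : ∀ i : ℕ, g (x + ((k + i : ℕ) : ℝ) * δ) ≤ g (x + (k : ℝ) * δ) := by
      intro i
      induction i with
      | zero => simp
      | succ i ih =>
        have hji : j ≤ k + i := le_trans hjk.le (Nat.le_add_right k i)
        have hji' : (j : ℝ) ≤ ((k + i : ℕ) : ℝ) := by exact_mod_cast hji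
        have hge : x + (j : ℝ) * δ ≤ x + ((k + i : ℕ) : ℝ) * δ := by
          have := mul_le_mul_of_nonneg_right hji' hδpos.le
          linarith
        have hc := hgcross hδpos hge hjdec'
        have heq : (x + ((k + i : ℕ) : ℝ) * δ) + δ = x + ((k + (i + 1) : ℕ) : ℝ) * δ := by
          push_cast
          ring
        rw [heq] at hc
        exact le_trans hc ih
    have hy_eq : x + ((k + (n - k) : ℕ) : ℝ) * δ = y := by
      have hnk : k + (n - k) = n := Nat.add_sub_cancel' hkn'.le
      rw [hnk, hδ_def]
      field_simp
      ring
    have hfin := hprop (n - k)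
    rw [hy_eq, ← hz'_def] at hfin
    have hmy : m ≤ g y := min_le_right _ _
    linarith
  -- conclusion
  intro r
  intro x hx y hy a b ha hb hab
  refine ⟨Set.mem_univ _, ?_⟩
  simp only [Set.mem_setOf_eq, smul_eq_mul]
  have hgx : r ≤ g x := hx.2
  have hgy : r ≤ g y := hy.2
  rcases eq_or_lt_of_le ha with ha0 | ha0
  · have hb1 : b = 1 := by linarith
    rw [← ha0, hb1]
    simpa using hgy
  rcases eq_or_lt_of_le hb with hb0 | hb0
  · have ha1 : a = 1 := by linarith
    rw [← hb0, ha1]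
    simpa using hgx
  rcases lt_trichotomy x y with hxy | hxy | hxy
  · have e1 : a * x + b * y - x = b * (y - x) := by
      have ha' : a = 1 - b := by linarith
      rw [ha']; ring
    have e2 : y - (a * x + b * y) = a * (y - x) := by
      have hb' : b = 1 - a := by linarith
      rw [hb']; ring
    have h1 : x < a * x + b * y := by
      linarith [mul_pos hb0 (sub_pos.mpr hxy)]
    have h2 : a * x + b * y < y := by
      linarith [mul_pos ha0 (sub_pos.mpr hxy)]
    have := main x (a * x + b * y) y h1 h2
    exact le_trans (le_min hgx hgy) this
  · rw [hxy]
    have : a * y + b * y = y := by rw [← add_mul, hab, one_mul]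
    rw [this]
    exact hgy
  · have e1 : a * x + b * y - y = a * (x - y) := by
      have hb' : b = 1 - a := by linarith
      rw [hb']; ring
    have e2 : x - (a * x + b * y) = b * (x - y) := by
      have ha' : a = 1 - b := by linarith
      rw [ha']; ring
    have h1 : y < a * x + b * y := by
      linarith [mul_pos ha0 (sub_pos.mpr hxy)]
    have h2 : a * x + b * y < x := by
      linarith [mul_pos hb0 (sub_pos.mpr hxy)]
    have := main y (a * x + b * y) x h1 h2
    rw [min_comm] at this
    exact le_trans (le_min hgx hgy) this
end
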